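/- For all integers n, k with 1 ≤ k ≤ n, the polynomial identity [n−k+1]_q · ( q^{n+k(k+1)/2} · [n−1 choose k]_q · [2n−k choose n]_q + q^{n+k(k−1)/2} · [n−1 choose k−1]_q · [2n−k+1 choose n]_q ) = [n+1]_q · q^{n+k(k−1)/2} · [2n−k choose k]_q · [2n−2k choose n−k]_q holds in ℤ[q]; equivalently, S_q(n,k) + S_q(n,k−1) = q^{n+k(k−1)/2} [2n−k choose k]_q [2n−2k choose n−k]_q / [n−k+1]_q, where S_q(n,j) = q^{n+j(j+1)/2} [n−1 choose j]_q [2n−j choose n]_q / [n+1]_q. -/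
import Mathlib


open Polynomial

/-- The q-integer `[n]_q = 1 + q + ⋯ + q^(n-1)` in `ℤ[q]`. -/
noncomputable def qInt (n : ℕ) : Polynomial ℤ := ∑ i ∈ Finset.range n, X ^ i

/-- The Gaussian binomial coefficient `[a choose b]_q` in `ℤ[q]`, defined by the
standard q-Pascal recurrence `[n+1 choose k+1] = [n choose k] + q^(k+1) [n choose k+1]`. -/
noncomputable def qBinom : ℕ → ℕ → Polynomial ℤ
  | _, 0 => 1
  | 0, _ + 1 => 0
  | n + 1, k + 1 => qBinom n k + X ^ (k + 1) * qBinom n (k + 1)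

lemma qInt_zero : qInt 0 = 0 := by simp [qInt]

lemma qInt_one : qInt 1 = 1 := by simp [qInt]

lemma qInt_succ (n : ℕ) : qInt (n + 1) = qInt n + X ^ n := by
  simp [qInt, Finset.sum_range_succ]

lemma qInt_add (a b : ℕ) : qInt (a + b) = qInt a + X ^ a * qInt b := by
  induction b with
  | zero => simp [qInt_zero]
  | succ b ih => rw [← Nat.add_assoc, qInt_succ, ih, qInt_succ b]; ring

lemma qInt_add_comm (a b : ℕ) :
    qInt a + X ^ a * qInt b = qInt b + X ^ b * qInt a := by
  rw [← qInt_add, ← qInt_add, Nat.add_comm]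

lemma qInt_ne_zero (n : ℕ) : qInt (n + 1) ≠ 0 := by
  intro h
  have := congrArg (Polynomial.eval 1) h
  simp [qInt] at this
  omega

lemma qBinom_zero (n : ℕ) : qBinom n 0 = 1 := by cases n <;> rfl

lemma qBinom_lt : ∀ a b : ℕ, a < b → qBinom a b = 0
  | 0, _ + 1, _ => rfl
  | a + 1, b + 1, h => by
    rw [qBinom, qBinom_lt a b (by omega), qBinom_lt a (b+1) (by omega)]
    ring

lemma qBinom_self : ∀ n : ℕ, qBinom n n = 1
  | 0 => rfl
  | n + 1 => by rw [qBinom, qBinom_self n, qBinom_lt n (n+1) (by omega)]; ring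

lemma qBinom_succ_self : ∀ n : ℕ, qBinom (n + 1) n = qInt (n + 1)
  | 0 => by rw [qBinom_zero, qInt_one]
  | n + 1 => by
    rw [qBinom, qBinom_succ_self n, qBinom_self,
      show qInt (n+1+1) = qInt (n+1) + X^(n+1) from qInt_succ (n+1)]; ring

noncomputable def qFact : ℕ → Polynomial ℤ
  | 0 => 1
  | n + 1 => qFact n * qInt (n + 1)

lemma qFact_succ (n : ℕ) : qFact (n + 1) = qFact n * qInt (n + 1) := rfl

lemma qFact_ne_zero : ∀ n : ℕ, qFact n ≠ 0
  | 0 => one_ne_zero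
  | n + 1 => mul_ne_zero (qFact_ne_zero n) (qInt_ne_zero n)

lemma fact_binom : ∀ a b : ℕ, qFact a * qFact b * qBinom (a + b) b = qFact (a + b)
  | a, 0 => by simp [qBinom_zero, qFact]
  | 0, b + 1 => by simp [qBinom_self, qFact]
  | a + 1, b + 1 => by
    have h : a + 1 + (b + 1) = (a + b + 1) + 1 := by omega
    rw [h, qBinom]
    have h1 := fact_binom (a + 1) b
    have h2 := fact_binom a (b + 1)
    rw [show a + 1 + b = a + b + 1 from by omega] at h1
    rw [show a + (b + 1) = a + b + 1 from by omega] at h2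
    rw [qFact_succ (a + b + 1), show qInt (a+b+1+1) = qInt (b+1) + X^(b+1) * qInt (a+1) from by
      rw [← qInt_add]; congr 1; omega]
    rw [qFact_succ a, qFact_succ b] at *
    linear_combination qInt (b+1) * h1 + X ^ (b+1) * qInt (a+1) * h2
  termination_by a b => a + b

lemma fact_binom' (a b n : ℕ) (h : a + b = n) :
    qFact a * qFact b * qBinom n b = qFact n := h ▸ fact_binom a b

lemma qint_core (a b : ℕ) :
    X ^ b * (qInt a * qInt (a + 1)) + qInt b * qInt (2 * a + b + 1)
      = qInt (a + b) * qInt (a + b + 1) := by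
  have e1 : qInt (2 * a + b + 1) = qInt b + X ^ b * (qInt a + X ^ a * qInt (a + 1)) := by
    rw [show (2*a+b+1) = b + (a + (a+1)) from by omega, qInt_add, qInt_add]
  have e2 : qInt (a + b) = qInt b + X ^ b * qInt a := by
    rw [show a + b = b + a from by omega, qInt_add]
  have e3 : qInt (a + b + 1) = qInt b + X ^ b * qInt (a + 1) := by
    rw [show a + b + 1 = b + (a + 1) from by omega, qInt_add]
  have h := qInt_add_comm a b
  rw [e1, e2, e3]
  linear_combination (X ^ b * qInt (a + 1)) * h

lemma core (m j : ℕ) :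
    qInt (m + 1) *
        (X ^ (j + 1) * (qBinom (m + j) (j + 1) * qBinom (2 * m + j + 1) (m + j + 1))
          + qBinom (m + j) j * qBinom (2 * m + j + 2) (m + j + 1))
      = qInt (m + j + 2) * (qBinom (2 * m + j + 1) (j + 1) * qBinom (2 * m) m) := by
  cases m with
  | zero =>
    simp only [Nat.zero_add, Nat.mul_zero, Nat.zero_mul, Nat.add_zero]
    have hss := qBinom_succ_self (j + 1)
    rw [show j + 1 + 1 = j + 2 from by omega] at hss
    rw [qBinom_lt j (j + 1) (by omega), qBinom_self j, hss, qBinom_self (j + 1), qBinom_zero, qInt_one]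
    ring
  | succ p =>
    simp only [show 2 * (p + 1) + j + 1 = 2 * p + j + 3 from by omega,
      show 2 * p + 2 + j + 1 = 2 * p + j + 3 from by omega,
      show 2 * p + 2 + j + 2 = 2 * p + j + 4 from by omega,
      show 2 * (p + 1) + j + 2 = 2 * p + j + 4 from by omega,
      show p + 1 + j + 1 = p + j + 2 from by omega,
      show 2 * (p + 1) = 2 * p + 2 from by omega,
      show p + 1 + 1 = p + 2 from by omega,
      show p + 1 + j + 2 = p + j + 3 from by omega]
    have h1 := fact_binom' p (j + 1) (p + 1 + j) (by omega)
    have h2 := fact_binom' (p + 1) (p + j + 2) (2 * p + j + 3) (by omega)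
    have h3 := fact_binom' (p + 1) j (p + 1 + j) (by omega)
    have h4 := fact_binom' (p + 2) (p + j + 2) (2 * p + j + 4) (by omega)
    have h5 := fact_binom' (2 * p + 2) (j + 1) (2 * p + j + 3) (by omega)
    have h6 := fact_binom' (p + 1) (p + 1) (2 * p + 2) (by omega)
    have hq := qint_core (p + 1) (j + 1)
    rw [show p + 1 + 1 = p + 2 from by omega,
      show 2 * (p + 1) + (j + 1) + 1 = 2 * p + j + 4 from by omega,
      show p + 1 + (j + 1) = p + j + 2 from by omega,
      show p + j + 2 + 1 = p + j + 3 from by omega] at hq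
    have u1 : qFact (j + 1) = qFact j * qInt (j + 1) := rfl
    have u2 : qFact (p + 1) = qFact p * qInt (p + 1) := rfl
    have u3 : qFact (p + 2) = qFact (p + 1) * qInt (p + 2) := by
      rw [show p + 2 = p + 1 + 1 from by omega, qFact_succ,
        show p + 1 + 1 = p + 2 from by omega]
    have u4 : qFact (2 * p + j + 4) = qFact (2 * p + j + 3) * qInt (2 * p + j + 4) := by
      rw [show 2 * p + j + 4 = 2 * p + j + 3 + 1 from by omega, qFact_succ,
        show 2 * p + j + 3 + 1 = 2 * p + j + 4 from by omega]
    set M := qFact (j + 1) * (qFact (p + 1) * qFact (p + 1) * qFact (p + j + 2)) with hMdef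
    set W := qFact (p + 1 + j) * qFact (2 * p + j + 3) with hWdef
    have e1 : qInt (p + 2) * (X ^ (j + 1) *
          (qBinom (p + 1 + j) (j + 1) * qBinom (2 * p + j + 3) (p + j + 2))) * M
        = X ^ (j + 1) * (qInt (p + 1) * qInt (p + 2)) * W := by
      calc qInt (p + 2) * (X ^ (j + 1) *
              (qBinom (p + 1 + j) (j + 1) * qBinom (2 * p + j + 3) (p + j + 2))) * M
          = X ^ (j + 1) * (qInt (p + 1) * qInt (p + 2)) *
              ((qFact p * qFact (j + 1) * qBinom (p + 1 + j) (j + 1)) *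
               (qFact (p + 1) * qFact (p + j + 2) * qBinom (2 * p + j + 3) (p + j + 2))) := by
            rw [hMdef, u2]; ring
        _ = X ^ (j + 1) * (qInt (p + 1) * qInt (p + 2)) * W := by
            rw [h1, h2, hWdef]
    have e2 : qInt (p + 2) * (qBinom (p + 1 + j) j * qBinom (2 * p + j + 4) (p + j + 2)) * M
        = qInt (j + 1) * qInt (2 * p + j + 4) * W := by
      calc qInt (p + 2) * (qBinom (p + 1 + j) j * qBinom (2 * p + j + 4) (p + j + 2)) * M
          = qInt (j + 1) * ((qFact (p + 1) * qFact j * qBinom (p + 1 + j) j) *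
              ((qFact (p + 1) * qInt (p + 2)) * qFact (p + j + 2) *
                qBinom (2 * p + j + 4) (p + j + 2))) := by
            rw [hMdef, u1]; ring
        _ = qInt (j + 1) * (qFact (p + 1 + j) *
              (qFact (p + 2) * qFact (p + j + 2) * qBinom (2 * p + j + 4) (p + j + 2))) := by
            rw [h3, u3]
        _ = qInt (j + 1) * (qFact (p + 1 + j) * qFact (2 * p + j + 4)) := by rw [h4]
        _ = qInt (j + 1) * qInt (2 * p + j + 4) * W := by rw [u4, hWdef]; ring
    have e3 : qInt (p + j + 3) * (qBinom (2 * p + j + 3) (j + 1) * qBinom (2 * p + 2) (p + 1)) * M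
        = qInt (p + j + 2) * qInt (p + j + 3) * W := by
      calc qInt (p + j + 3) * (qBinom (2 * p + j + 3) (j + 1) * qBinom (2 * p + 2) (p + 1)) * M
          = qInt (p + j + 3) * qFact (p + j + 2) *
              ((qFact (p + 1) * qFact (p + 1) * qBinom (2 * p + 2) (p + 1)) *
               (qFact (j + 1) * qBinom (2 * p + j + 3) (j + 1))) := by
            rw [hMdef]; ring
        _ = qInt (p + j + 3) * qFact (p + j + 2) *
              (qFact (2 * p + 2) * qFact (j + 1) * qBinom (2 * p + j + 3) (j + 1)) := by
            rw [h6]; ring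
        _ = qInt (p + j + 3) * qFact (p + j + 2) * qFact (2 * p + j + 3) := by rw [h5]
        _ = qInt (p + j + 2) * qInt (p + j + 3) * W := by
            rw [show qFact (p + j + 2) = qFact (p + 1 + j) * qInt (p + j + 2) from by
              rw [show p + j + 2 = p + 1 + j + 1 from by omega, qFact_succ,
                show p + 1 + j + 1 = p + j + 2 from by omega], hWdef]
            ring
    have hM : M ≠ 0 := by
      rw [hMdef]
      exact mul_ne_zero (qFact_ne_zero _)
        (mul_ne_zero (mul_ne_zero (qFact_ne_zero _) (qFact_ne_zero _)) (qFact_ne_zero _))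
    apply mul_right_cancel₀ hM
    calc qInt (p + 2) *
            (X ^ (j + 1) * (qBinom (p + 1 + j) (j + 1) * qBinom (2 * p + j + 3) (p + j + 2))
              + qBinom (p + 1 + j) j * qBinom (2 * p + j + 4) (p + j + 2)) * M
        = qInt (p + 2) * (X ^ (j + 1) *
            (qBinom (p + 1 + j) (j + 1) * qBinom (2 * p + j + 3) (p + j + 2))) * M
          + qInt (p + 2) * (qBinom (p + 1 + j) j * qBinom (2 * p + j + 4) (p + j + 2)) * M := by
          ring
      _ = (X ^ (j + 1) * (qInt (p + 1) * qInt (p + 2))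
            + qInt (j + 1) * qInt (2 * p + j + 4)) * W := by rw [e1, e2]; ring
      _ = qInt (p + j + 2) * qInt (p + j + 3) * W := by rw [hq]
      _ = qInt (p + j + 3) *
            (qBinom (2 * p + j + 3) (j + 1) * qBinom (2 * p + 2) (p + 1)) * M := e3.symm

/-- [n−k+1]_q · ( q^(n+k(k+1)/2) [n−1 choose k]_q [2n−k choose n]_q
      + q^(n+k(k−1)/2) [n−1 choose k−1]_q [2n−k+1 choose n]_q )
  = [n+1]_q · q^(n+k(k−1)/2) [2n−k choose k]_q [2n−2k choose n−k]_q,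
i.e. S_q(n,k) + S_q(n,k−1) = q^(n+k(k−1)/2) [2n−k choose k]_q [2n−2k choose n−k]_q / [n−k+1]_q. -/
theorem sq_sum_identity (n k : ℕ) (hk1 : 1 ≤ k) (hk : k ≤ n) :
    qInt (n - k + 1) *
        (X ^ (n + k * (k + 1) / 2) * (qBinom (n - 1) k * qBinom (2 * n - k) n)
          + X ^ (n + k * (k - 1) / 2) * (qBinom (n - 1) (k - 1) * qBinom (2 * n - k + 1) n))
      = qInt (n + 1) *
          (X ^ (n + k * (k - 1) / 2) *
            (qBinom (2 * n - k) k * qBinom (2 * n - 2 * k) (n - k))) := by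
  obtain ⟨j, rfl⟩ : ∃ j, k = j + 1 := ⟨k - 1, by omega⟩
  obtain ⟨m, rfl⟩ : ∃ m, n = m + (j + 1) := ⟨n - (j + 1), by omega⟩
  have hd : (j + 1) * (j + 1 + 1) / 2 = (j + 1) * j / 2 + (j + 1) := by
    rw [show (j + 1) * (j + 1 + 1) = (j + 1) * j + 2 * (j + 1) from by ring,
      Nat.add_mul_div_left _ _ (by norm_num : (0:ℕ) < 2)]
  simp only [show m + (j + 1) = m + j + 1 from by omega, hd,
    Nat.add_sub_cancel,
    show m + j + 1 - (j + 1) = m from by omega,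
    show m + j + 1 - 1 = m + j from by omega,
    show 2 * (m + j + 1) - (j + 1) = 2 * m + j + 1 from by omega,
    show 2 * m + j + 1 + 1 = 2 * m + j + 2 from by omega,
    show 2 * (m + j + 1) - 2 * (j + 1) = 2 * m from by omega,
    show m + j + 1 + 1 = m + j + 2 from by omega]
  linear_combination (X : Polynomial ℤ) ^ (m + j + 1 + (j + 1) * j / 2) * core m j
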